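/- Let k ≥ 3 and consider polynomials g₁,...,g_{2k-1} ∈ Q[x₁,...,x_{2k-1}] (the x_i distinct variables) satisfying the cyclic system g_i x_{i+k-1} = g_{i-1} x_{i-1} for all i mod (2k-1). Then there exists a ∈ Q[x₁,...,x_{2k-1}] with g_i = a · x_{i+k} x_{i+k+1} ⋯ x_{i+2k-2} (the product of the k-1 variables x_j for j in the arc {i+k,...,i+2k-2} mod 2k-1), for every i. -/

import Mathlib

open MvPolynomial

namespace CyclicSyzygyAux

variable {σ : Type*} [DecidableEq σ]

noncomputable def killX (a : σ) : MvPolynomial σ ℚ →ₐ[ℚ] MvPolynomial σ ℚ :=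
  aeval (fun j => if j = a then 0 else X j)

lemma killX_X_self (a : σ) : killX a (X a) = 0 := by simp [killX]

lemma X_dvd_sub_killX (a : σ) (p : MvPolynomial σ ℚ) :
    (X a : MvPolynomial σ ℚ) ∣ p - killX a p := by
  induction p using MvPolynomial.induction_on with
  | C r => simp [killX]
  | add p q hp hq =>
      rw [map_add]
      have h : p + q - (killX a p + killX a q) = (p - killX a p) + (q - killX a q) := by ring
      rw [h]; exact dvd_add hp hq
  | mul_X p j hp =>
      rw [map_mul]
      by_cases hj : j = a
      · subst hj
        rw [killX_X_self, mul_zero, sub_zero]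
        exact dvd_mul_left _ _
      · rw [show killX a (X j) = X j from by simp [killX, hj]]
        have h : p * X j - killX a p * X j = (p - killX a p) * X j := by ring
        rw [h]
        exact hp.mul_right _

lemma X_dvd_iff_killX (a : σ) (p : MvPolynomial σ ℚ) :
    (X a : MvPolynomial σ ℚ) ∣ p ↔ killX a p = 0 := by
  constructor
  · rintro ⟨q, rfl⟩
    rw [map_mul, killX_X_self, zero_mul]
  · intro h
    have h2 := X_dvd_sub_killX a p
    rwa [h, sub_zero] at h2

lemma prime_X_rat (a : σ) : Prime (X a : MvPolynomial σ ℚ) := by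
  refine ⟨X_ne_zero a, ?_, ?_⟩
  · intro h
    have h2 := h.map (constantCoeff : MvPolynomial σ ℚ →+* ℚ)
    rw [constantCoeff_X] at h2
    exact not_isUnit_zero h2
  · intro p q hpq
    have h0 : killX a p * killX a q = 0 := by
      rw [← map_mul]; exact (X_dvd_iff_killX a _).mp hpq
    rcases mul_eq_zero.mp h0 with h | h
    · exact Or.inl ((X_dvd_iff_killX a p).mpr h)
    · exact Or.inr ((X_dvd_iff_killX a q).mpr h)

end CyclicSyzygyAux

open CyclicSyzygyAux in
/-- Second syzygy: if polynomials `g_i ∈ ℚ[x₁,...,x_{2k-1}]` (indices cyclic mod `2k-1`)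
satisfy `gᵢ x_{i+k-1} = g_{i-1} x_{i-1}` for all `i`, then there is a single polynomial
`a` with `gᵢ = a ⋅ x_{i+k} x_{i+k+1} ⋯ x_{i+2k-2}` for every `i`. -/
theorem cyclic_syzygy_rank_one (k m : ℕ) [NeZero m] (hk : 3 ≤ k) (hm : m = 2 * k - 1)
    (g : ZMod m → MvPolynomial (ZMod m) ℚ)
    (hg : ∀ i : ZMod m,
      g i * X (i + ((k - 1 : ℕ) : ZMod m)) = g (i - 1) * X (i - 1)) :
    ∃ a : MvPolynomial (ZMod m) ℚ, ∀ i : ZMod m,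
      g i = a * ∏ j ∈ Finset.range (k - 1), X (i + ((k : ℕ) : ZMod m) + (j : ZMod m)) := by
  classical
  have hm5 : 5 ≤ m := by omega
  set c : ZMod m := ((k - 1 : ℕ) : ZMod m) with hc
  have hcastinj : ∀ a b : ℕ, a < m → b < m → ((a : ZMod m) = (b : ZMod m)) → a = b := by
    intro a b ha hb h
    have h2 := congrArg ZMod.val h
    rwa [ZMod.val_cast_of_lt ha, ZMod.val_cast_of_lt hb] at h2
  -- the chain relation
  have chain : ∀ t : ℕ, ∀ i : ZMod m,
      g i * ∏ s ∈ Finset.range t, X (i + c - (s : ZMod m)) =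
      g (i - (t : ZMod m)) * ∏ s ∈ Finset.range t, X (i - 1 - (s : ZMod m)) := by
    intro t
    induction t with
    | zero => intro i; simp
    | succ t ih =>
        intro i
        rw [Finset.prod_range_succ, Finset.prod_range_succ, Nat.cast_add, Nat.cast_one]
        have e1 : (X (i + c - (t : ZMod m)) : MvPolynomial (ZMod m) ℚ) =
            X ((i - (t : ZMod m)) + c) := by congr 1; ring
        have e2 : (X (i - 1 - (t : ZMod m)) : MvPolynomial (ZMod m) ℚ) =
            X ((i - (t : ZMod m)) - 1) := by congr 1; ring
        have e3 : i - ((t : ZMod m) + 1) = i - (t : ZMod m) - 1 := by ring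
        rw [e1, e2, e3]
        linear_combination (X ((i - (t : ZMod m)) + c) : MvPolynomial (ZMod m) ℚ) * ih i +
          (∏ s ∈ Finset.range t, X (i - 1 - (s : ZMod m))) * hg (i - (t : ZMod m))
  -- each variable divides
  have hXdvd : ∀ t : ℕ, t < k - 1 → ∀ i : ZMod m,
      (X (i - 1 - (t : ZMod m)) : MvPolynomial (ZMod m) ℚ) ∣ g i := by
    intro t ht i
    have hp := prime_X_rat (σ := ZMod m) (i - 1 - (t : ZMod m))
    have hdvd1 : (X (i - 1 - (t : ZMod m)) : MvPolynomial (ZMod m) ℚ) ∣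
        g (i - ((t + 1 : ℕ) : ZMod m)) * ∏ s ∈ Finset.range (t + 1), X (i - 1 - (s : ZMod m)) := by
      exact dvd_mul_of_dvd_right
        (Finset.dvd_prod_of_mem (fun s : ℕ => (X (i - 1 - (s : ZMod m)) : MvPolynomial (ZMod m) ℚ))
          (Finset.self_mem_range_succ t)) _
    rw [← chain (t + 1) i] at hdvd1
    rcases hp.dvd_mul.mp hdvd1 with h | h
    · exact h
    · exfalso
      obtain ⟨s, hs, hds⟩ := hp.exists_mem_finset_dvd h
      rw [Finset.mem_range] at hs
      rw [X_dvd_X] at hds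
      have hsc : (s : ZMod m) = c + 1 + (t : ZMod m) := by linear_combination hds
      have hsc2 : ((s : ℕ) : ZMod m) = ((k + t : ℕ) : ZMod m) := by
        rw [hsc, hc, show ((k + t : ℕ) : ZMod m) = ((k - 1 + 1 + t : ℕ) : ZMod m) from by
          rw [show k - 1 + 1 + t = k + t from by omega]]
        push_cast
        ring
      have := hcastinj s (k + t) (by omega) (by omega) hsc2
      omega
  -- the product divides
  have hPdvd : ∀ t : ℕ, t ≤ k - 1 → ∀ i : ZMod m,
      (∏ s ∈ Finset.range t, X (i - 1 - (s : ZMod m)) : MvPolynomial (ZMod m) ℚ) ∣ g i := by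
    intro t
    induction t with
    | zero => intro _ i; simp
    | succ t ih =>
        intro ht i
        obtain ⟨h, hh⟩ := ih (by omega) i
        have hx : (X (i - 1 - (t : ZMod m)) : MvPolynomial (ZMod m) ℚ) ∣ g i :=
          hXdvd t (by omega) i
        rw [hh] at hx
        have hp := prime_X_rat (σ := ZMod m) (i - 1 - (t : ZMod m))
        rcases hp.dvd_mul.mp hx with h1 | h2
        · exfalso
          obtain ⟨s, hs, hds⟩ := hp.exists_mem_finset_dvd h1
          rw [Finset.mem_range] at hs
          rw [X_dvd_X] at hds
          have hts : ((t : ℕ) : ZMod m) = ((s : ℕ) : ZMod m) := by linear_combination -hds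
          have := hcastinj t s (by omega) (by omega) hts
          omega
        · obtain ⟨h', rfl⟩ := h2
          refine ⟨h', ?_⟩
          rw [hh, Finset.prod_range_succ]
          ring
  set P : ZMod m → MvPolynomial (ZMod m) ℚ :=
    fun i => ∏ s ∈ Finset.range (k - 1), X (i - 1 - (s : ZMod m)) with hPdef
  -- P satisfies the same cyclic relation
  have hcc : c + c + 1 = 0 := by
    have h : ((k - 1 + (k - 1) + 1 : ℕ) : ZMod m) = 0 := by
      rw [show k - 1 + (k - 1) + 1 = m from by omega]; exact ZMod.natCast_self m
    rw [hc]
    push_cast at h ⊢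
    linear_combination h
  have hP : ∀ i : ZMod m, P i * X (i + c) = P (i - 1) * X (i - 1) := by
    intro i
    have h12 : (P i * X (i - 1 - ((k - 1 : ℕ) : ZMod m)) : MvPolynomial (ZMod m) ℚ) =
        (∏ s ∈ Finset.range (k - 1), X (i - 1 - ((s + 1 : ℕ) : ZMod m))) *
          X (i - 1 - ((0 : ℕ) : ZMod m)) := by
      rw [← Finset.prod_range_succ (fun s : ℕ => (X (i - 1 - (s : ZMod m)) : MvPolynomial (ZMod m) ℚ)) (k - 1),
        Finset.prod_range_succ']
    have h3 : (∏ s ∈ Finset.range (k - 1), X (i - 1 - ((s + 1 : ℕ) : ZMod m)) : MvPolynomial (ZMod m) ℚ)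
        = P (i - 1) := by
      apply Finset.prod_congr rfl
      intro s _
      congr 1
      rw [Nat.cast_add, Nat.cast_one]
      ring
    have h4 : X (i - 1 - ((k - 1 : ℕ) : ZMod m)) = (X (i + c) : MvPolynomial (ZMod m) ℚ) := by
      congr 1
      rw [← hc]
      linear_combination -hcc
    have h5 : X (i - 1 - ((0 : ℕ) : ZMod m)) = (X (i - 1) : MvPolynomial (ZMod m) ℚ) := by
      congr 1
      rw [Nat.cast_zero, sub_zero]
    calc P i * X (i + c) = P i * X (i - 1 - ((k - 1 : ℕ) : ZMod m)) := by rw [h4]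
      _ = (∏ s ∈ Finset.range (k - 1), X (i - 1 - ((s + 1 : ℕ) : ZMod m))) *
            X (i - 1 - ((0 : ℕ) : ZMod m)) := h12
      _ = P (i - 1) * X (i - 1) := by rw [h3, h5]
  have hPne : ∀ i : ZMod m, (P i * X (i + c) : MvPolynomial (ZMod m) ℚ) ≠ 0 := by
    intro i
    apply mul_ne_zero
    · rw [hPdef]
      exact Finset.prod_ne_zero_iff.mpr fun s _ => X_ne_zero _
    · exact X_ne_zero _
  choose A hA using fun i => hPdvd (k - 1) le_rfl i
  have hAstep : ∀ i : ZMod m, A i = A (i - 1) := by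
    intro i
    have key : A i * (P i * X (i + c)) = A (i - 1) * (P i * X (i + c)) := by
      calc A i * (P i * X (i + c)) = (g i) * X (i + c) := by rw [hA i]; ring
        _ = g (i - 1) * X (i - 1) := hg i
        _ = A (i - 1) * (P (i - 1) * X (i - 1)) := by rw [hA (i - 1)]; ring
        _ = A (i - 1) * (P i * X (i + c)) := by rw [hP i]
    exact mul_right_cancel₀ (hPne i) key
  have hconstN : ∀ n : ℕ, A ((n : ℕ) : ZMod m) = A 0 := by
    intro n
    induction n with
    | zero => simp
    | succ n ih =>
        have h := hAstep (((n : ℕ) : ZMod m) + 1)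
        rw [add_sub_cancel_right] at h
        rw [Nat.cast_add, Nat.cast_one, h, ih]
  have hconst : ∀ i : ZMod m, A i = A 0 := by
    intro i
    obtain ⟨n, rfl⟩ := ZMod.natCast_zmod_surjective i
    exact hconstN n
  refine ⟨A 0, fun i => ?_⟩
  have hre : (∏ j ∈ Finset.range (k - 1), X (i + ((k : ℕ) : ZMod m) + (j : ZMod m)) :
      MvPolynomial (ZMod m) ℚ) = P i := by
    rw [← Finset.prod_range_reflect]
    apply Finset.prod_congr rfl
    intro j hj
    rw [Finset.mem_range] at hj
    congr 1
    rw [show k - 1 - 1 - j = k - 2 - j from by omega,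
      Nat.cast_sub (show j ≤ k - 2 from by omega)]
    have hk2 : ((k : ℕ) : ZMod m) + ((k - 2 : ℕ) : ZMod m) + 1 = 0 := by
      have h : ((k + (k - 2) + 1 : ℕ) : ZMod m) = 0 := by
        rw [show k + (k - 2) + 1 = m from by omega]; exact ZMod.natCast_self m
      push_cast at h ⊢
      linear_combination h
    linear_combination hk2
  rw [hre, hA i, hconst i]
  ring
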